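/- Let Θ : ℝ → ℝ be C³ on [−L, L], vanishing outside [−L, L], with Θ > 0 on (−L, L), Θ(±L) = Θ'(±L) = Θ''(±L) = 0, Θ'''(−L) = −Θ'''(L) = γ > 0, and Θ ≡ 1 on [−L+ε, L−ε] where 0 < ε < L. Then there exists K₀ > 1 such that for all K ≥ K₀, the function Θ_K = KΘ satisfies Θ_K''(x) + 2λ Θ_K(x) ln Θ_K(x) ≥ 0 for all x ∈ ℝ (with the convention u ln u = 0 at u = 0). -/

import Mathlib

open Set

/-- Key elementary inequality: `u * (-log u) ≤ 4 * (√u * √√u)` for `u > 0`. -/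
lemma mul_neg_log_le {u : ℝ} (hu : 0 < u) :
    u * (-Real.log u) ≤ 4 * (Real.sqrt u * Real.sqrt (Real.sqrt u)) := by
  set w := Real.sqrt (Real.sqrt u) with hw
  have hsu : 0 < Real.sqrt u := Real.sqrt_pos.2 hu
  have hwpos : 0 < w := Real.sqrt_pos.2 hsu
  have hww : w * w = Real.sqrt u := Real.mul_self_sqrt hsu.le
  have hss : Real.sqrt u * Real.sqrt u = u := Real.mul_self_sqrt hu.le
  have hlog : Real.log u = 4 * Real.log w := by
    rw [hw, Real.log_sqrt (Real.sqrt_nonneg u), Real.log_sqrt hu.le]; ring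
  have h1 : -Real.log w ≤ 1 / w := by
    have := Real.log_le_sub_one_of_pos (show (0:ℝ) < 1 / w by positivity)
    rw [Real.log_div one_ne_zero hwpos.ne', Real.log_one] at this
    linarith
  have h2 : -Real.log u ≤ 4 / w := by
    have h4w : 4 * (1 / w) = 4 / w := by ring
    rw [hlog]; linarith
  have h3 : u * (-Real.log u) ≤ u * (4 / w) :=
    mul_le_mul_of_nonneg_left h2 hu.le
  have h4 : u * (4 / w) = 4 * (Real.sqrt u * w) := by
    field_simp
    nlinarith [hww, hss]
  calc u * (-Real.log u) ≤ u * (4 / w) := h3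
    _ = 4 * (Real.sqrt u * w) := h4

/-- In the boundary strip: `2λ θ (-log θ) ≤ (γ/2) t` when `θ ≤ M t²` and `t` small. -/
lemma strip_bound {lam γ M t θ : ℝ} (hlam : 0 < lam) (hγ : 0 < γ) (hM : 1 ≤ M)
    (ht : 0 < t) (hθ : 0 < θ) (hquad : θ ≤ M * t ^ 2)
    (htδ : t ≤ (γ / (16 * lam * M ^ 2)) ^ 2) :
    2 * lam * (θ * (-Real.log θ)) ≤ γ / 2 * t := by
  have hM0 : (0:ℝ) < M := lt_of_lt_of_le one_pos hM
  have key := mul_neg_log_le hθ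
  have h1 : Real.sqrt θ ≤ Real.sqrt M * t := by
    calc Real.sqrt θ ≤ Real.sqrt (M * t ^ 2) := Real.sqrt_le_sqrt hquad
      _ = Real.sqrt M * t := by
          rw [Real.sqrt_mul hM0.le, Real.sqrt_sq ht.le]
  have h2 : Real.sqrt (Real.sqrt θ) ≤ Real.sqrt (Real.sqrt M) * Real.sqrt t := by
    calc Real.sqrt (Real.sqrt θ) ≤ Real.sqrt (Real.sqrt M * t) := Real.sqrt_le_sqrt h1
      _ = Real.sqrt (Real.sqrt M) * Real.sqrt t := Real.sqrt_mul (Real.sqrt_nonneg M) t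
  have hsM : Real.sqrt M ≤ M := by
    have h := Real.sqrt_le_sqrt (show M ≤ M ^ 2 by nlinarith)
    rwa [Real.sqrt_sq hM0.le] at h
  have hssM : Real.sqrt (Real.sqrt M) ≤ M := (Real.sqrt_le_sqrt hsM).trans hsM
  have hst : Real.sqrt t ≤ γ / (16 * lam * M ^ 2) := by
    have h := Real.sqrt_le_sqrt htδ
    rwa [Real.sqrt_sq (by positivity)] at h
  have hb1 : Real.sqrt θ * Real.sqrt (Real.sqrt θ)
      ≤ (Real.sqrt M * t) * (Real.sqrt (Real.sqrt M) * Real.sqrt t) :=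
    mul_le_mul h1 h2 (Real.sqrt_nonneg _) (by positivity)
  have hb2 : (Real.sqrt M * t) * (Real.sqrt (Real.sqrt M) * Real.sqrt t)
      ≤ (M * t) * (M * Real.sqrt t) :=
    mul_le_mul (mul_le_mul_of_nonneg_right hsM ht.le)
      (mul_le_mul_of_nonneg_right hssM (Real.sqrt_nonneg t)) (by positivity) (by positivity)
  have hθnl : θ * (-Real.log θ) ≤ 4 * ((M * t) * (M * Real.sqrt t)) := by
    have k1 := mul_le_mul_of_nonneg_left hb1 (by norm_num : (0:ℝ) ≤ 4)
    have k2 := mul_le_mul_of_nonneg_left hb2 (by norm_num : (0:ℝ) ≤ 4)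
    linarith
  have h5 : 2 * lam * (θ * (-Real.log θ)) ≤ 2 * lam * (4 * ((M * t) * (M * Real.sqrt t))) :=
    mul_le_mul_of_nonneg_left hθnl (by positivity)
  have h6 : 2 * lam * (4 * ((M * t) * (M * Real.sqrt t))) = 8 * lam * M ^ 2 * (t * Real.sqrt t) := by
    ring
  have h7 : 8 * lam * M ^ 2 * (t * Real.sqrt t)
      ≤ 8 * lam * M ^ 2 * (t * (γ / (16 * lam * M ^ 2))) :=
    mul_le_mul_of_nonneg_left (mul_le_mul_of_nonneg_left hst ht.le) (by positivity)
  have h8 : 8 * lam * M ^ 2 * (t * (γ / (16 * lam * M ^ 2))) = γ / 2 * t := by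
    field_simp; ring
  linarith

set_option maxHeartbeats 1600000 in
theorem plateau_subsolution (lam L ε γ : ℝ) (hlam : 0 < lam) (hL : 0 < L)
    (hε : 0 < ε) (hεL : ε < L) (hγ : 0 < γ)
    (Θ : ℝ → ℝ) (hC2 : ContDiff ℝ 2 Θ)
    (hC3 : ContDiffOn ℝ 3 Θ (Set.Icc (-L) L))
    (hsupp : ∀ x, x ∉ Set.Icc (-L) L → Θ x = 0)
    (hpos : ∀ x ∈ Set.Ioo (-L) L, 0 < Θ x)
    (hΘL : Θ (-L) = 0 ∧ Θ L = 0)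
    (hΘ'L : deriv Θ (-L) = 0 ∧ deriv Θ L = 0)
    (hΘ''L : deriv (deriv Θ) (-L) = 0 ∧ deriv (deriv Θ) L = 0)
    (hΘ'''L : iteratedDerivWithin 3 Θ (Set.Icc (-L) L) (-L) = γ ∧
        iteratedDerivWithin 3 Θ (Set.Icc (-L) L) L = -γ)
    (hplateau : ∀ x ∈ Set.Icc (-L + ε) (L - ε), Θ x = 1) :
    ∃ K₀ > (1:ℝ), ∀ K ≥ K₀, ∀ x : ℝ,
      0 ≤ K * deriv (deriv Θ) x + 2 * lam * (K * Θ x) * Real.log (K * Θ x) := by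
  obtain ⟨hΘL1, hΘL2⟩ := hΘL
  obtain ⟨hΘ'L1, hΘ'L2⟩ := hΘ'L
  obtain ⟨hΘ''L1, hΘ''L2⟩ := hΘ''L
  obtain ⟨h3L1, h3L2⟩ := hΘ'''L
  set f := deriv (deriv Θ) with hfdef
  set s := Set.Icc (-L) L with hsdef
  have hLL : -L < L := by linarith
  have hus : UniqueDiffOn ℝ s := uniqueDiffOn_Icc hLL
  have hmemL : -L ∈ s := Set.left_mem_Icc.2 hLL.le
  have hmemR : L ∈ s := Set.right_mem_Icc.2 hLL.le
  -- differentiability facts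
  have hdΘ : Differentiable ℝ Θ := hC2.differentiable two_ne_zero
  have hdd : Differentiable ℝ (deriv Θ) ∧ Continuous f := by
    have h1 : ContDiff ℝ (1+1) Θ := by norm_num; exact hC2
    have h2 := (contDiff_succ_iff_deriv.mp h1).2.2
    have h3 : ContDiff ℝ (0+1) (deriv Θ) := by norm_num; exact h2
    have h4 := contDiff_succ_iff_deriv.mp h3
    exact ⟨h4.1, h4.2.2.continuous⟩
  obtain ⟨hdΘ', hcf⟩ := hdd
  -- Θ is nonnegative
  have hΘnonneg : ∀ x, 0 ≤ Θ x := by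
    intro x
    by_cases hx : x ∈ Set.Ioo (-L) L
    · exact (hpos x hx).le
    · by_cases hx2 : x ∈ s
      · rcases eq_or_lt_of_le hx2.1 with h | h
        · rw [← h, hΘL1]
        · rcases eq_or_lt_of_le hx2.2 with h' | h'
          · rw [h', hΘL2]
          · exact absurd ⟨h, h'⟩ hx
      · rw [hsupp x hx2]
  -- f vanishes outside [-L, L]
  have hfout : ∀ x, x ∉ s → f x = 0 := by
    have hz : ∀ U : Set ℝ, IsOpen U → (∀ y ∈ U, Θ y = 0) → ∀ y ∈ U, f y = 0 := by
      intro U hU hΘ0 y hy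
      have hd1 : ∀ z ∈ U, deriv Θ z = 0 := by
        intro z hzU
        have hev : Θ =ᶠ[nhds z] (fun _ => (0:ℝ)) :=
          Filter.eventuallyEq_of_mem (hU.mem_nhds hzU) hΘ0
        rw [hev.deriv_eq, deriv_const]
      have hev2 : deriv Θ =ᶠ[nhds y] (fun _ => (0:ℝ)) :=
        Filter.eventuallyEq_of_mem (hU.mem_nhds hy) hd1
      show deriv (deriv Θ) y = 0
      rw [hev2.deriv_eq, deriv_const]
    intro x hx
    rw [hsdef, Set.mem_Icc, not_and_or, not_le, not_le] at hx
    rcases hx with h | h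
    · exact hz (Set.Iio (-L)) isOpen_Iio
        (fun y hy => hsupp y (fun hc => absurd hc.1 (not_le.2 hy))) x h
    · exact hz (Set.Ioi L) isOpen_Ioi
        (fun y hy => hsupp y (fun hc => absurd hc.2 (not_le.2 hy))) x h
  -- bound on |f| over the interval
  obtain ⟨M, hM1, hMb⟩ : ∃ M, 1 ≤ M ∧ ∀ x ∈ s, |f x| ≤ M := by
    obtain ⟨C, hC⟩ := (isCompact_Icc (a := -L) (b := L)).exists_bound_of_continuousOn
      hcf.continuousOn
    refine ⟨max C 1, le_max_right _ _, fun x hx => ?_⟩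
    have h := hC x hx
    rw [Real.norm_eq_abs] at h
    exact h.trans (le_max_left _ _)
  have hM0 : (0:ℝ) < M := lt_of_lt_of_le one_pos hM1
  -- quadratic bounds on Θ near the endpoints
  have hMb' : ∀ y ∈ s, ‖deriv (deriv Θ) y‖ ≤ M := by
    intro y hy; rw [Real.norm_eq_abs]; exact hMb y hy
  have hΘ'bL : ∀ x ∈ s, |deriv Θ x| ≤ M * (x + L) := by
    intro x hx
    have h := Convex.norm_image_sub_le_of_norm_deriv_le (f := deriv Θ) (s := s)
      (fun y _ => hdΘ' y) hMb' (convex_Icc _ _) hmemL hx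
    rw [hΘ'L1, sub_zero, Real.norm_eq_abs, Real.norm_eq_abs,
      abs_of_nonneg (by linarith [hx.1] : (0:ℝ) ≤ x - -L)] at h
    calc |deriv Θ x| ≤ M * (x - -L) := h
      _ = M * (x + L) := by ring
  have hΘ'bR : ∀ x ∈ s, |deriv Θ x| ≤ M * (L - x) := by
    intro x hx
    have h := Convex.norm_image_sub_le_of_norm_deriv_le (f := deriv Θ) (s := s)
      (fun y _ => hdΘ' y) hMb' (convex_Icc _ _) hmemR hx
    rw [hΘ'L2, sub_zero, Real.norm_eq_abs, Real.norm_eq_abs,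
      abs_of_nonpos (by linarith [hx.2] : x - L ≤ (0:ℝ))] at h
    calc |deriv Θ x| ≤ M * -(x - L) := h
      _ = M * (L - x) := by ring
  have hquadL : ∀ x ∈ s, Θ x ≤ M * (x + L) ^ 2 := by
    intro x hx
    have hxL : -L ≤ x := hx.1
    have hbnd : ∀ y ∈ Set.Icc (-L) x, ‖deriv Θ y‖ ≤ M * (x + L) := by
      intro y hy
      rw [Real.norm_eq_abs]
      refine (hΘ'bL y ⟨hy.1, le_trans hy.2 hx.2⟩).trans ?_
      exact mul_le_mul_of_nonneg_left (by linarith [hy.2]) hM0.le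
    have h := Convex.norm_image_sub_le_of_norm_deriv_le (f := Θ) (s := Set.Icc (-L) x)
      (fun y _ => hdΘ y) hbnd (convex_Icc _ _)
      (Set.left_mem_Icc.2 hxL) (Set.right_mem_Icc.2 hxL)
    rw [hΘL1, sub_zero, Real.norm_eq_abs, Real.norm_eq_abs,
      abs_of_nonneg (by linarith : (0:ℝ) ≤ x - -L)] at h
    calc Θ x ≤ |Θ x| := le_abs_self _
      _ ≤ M * (x + L) * (x - -L) := h
      _ = M * (x + L) ^ 2 := by ring
  have hquadR : ∀ x ∈ s, Θ x ≤ M * (L - x) ^ 2 := by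
    intro x hx
    have hxL : x ≤ L := hx.2
    have hbnd : ∀ y ∈ Set.Icc x L, ‖deriv Θ y‖ ≤ M * (L - x) := by
      intro y hy
      rw [Real.norm_eq_abs]
      refine (hΘ'bR y ⟨le_trans hx.1 hy.1, hy.2⟩).trans ?_
      exact mul_le_mul_of_nonneg_left (by linarith [hy.1]) hM0.le
    have h := Convex.norm_image_sub_le_of_norm_deriv_le (f := Θ) (s := Set.Icc x L)
      (fun y _ => hdΘ y) hbnd (convex_Icc _ _)
      (Set.right_mem_Icc.2 hxL) (Set.left_mem_Icc.2 hxL)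
    rw [hΘL2, sub_zero, Real.norm_eq_abs, Real.norm_eq_abs,
      abs_of_nonpos (by linarith : x - L ≤ (0:ℝ))] at h
    calc Θ x ≤ |Θ x| := le_abs_self _
      _ ≤ M * (L - x) * -(x - L) := h
      _ = M * (L - x) ^ 2 := by ring
  -- lower bounds on f near the endpoints
  obtain ⟨δ₁, hδ₁pos, hs1⟩ : ∃ δ₁ > 0, ∀ x ∈ s, -L < x → x < -L + δ₁ →
      γ / 2 * (x + L) ≤ f x := by
    have heq2 : ∀ y ∈ s, iteratedDerivWithin 2 Θ s y = f y := by
      intro y hy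
      have e1 : Set.EqOn (iteratedDerivWithin 1 Θ s) (deriv Θ) s := by
        intro z hz
        rw [iteratedDerivWithin_one]
        exact (hdΘ z).derivWithin (hus z hz)
      have e2 : iteratedDerivWithin 2 Θ s y
          = derivWithin (iteratedDerivWithin 1 Θ s) s y :=
        congrFun iteratedDerivWithin_succ y
      rw [e2, derivWithin_congr e1 (e1 hy)]
      exact (hdΘ' y).derivWithin (hus y hy)
    have hdiff2 : DifferentiableWithinAt ℝ (iteratedDerivWithin 2 Θ s) s (-L) :=
      (hC3.differentiableOn_iteratedDerivWithin (by norm_num) hus) _ hmemL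
    have e3 : derivWithin (iteratedDerivWithin 2 Θ s) s (-L) = γ := by
      rw [← iteratedDerivWithin_succ]
      exact h3L1
    have hd3 : HasDerivWithinAt f γ s (-L) :=
      (e3 ▸ hdiff2.hasDerivWithinAt).congr
        (fun y hy => (heq2 y hy).symm) ((heq2 _ hmemL).symm)
    rw [hasDerivWithinAt_iff_tendsto_slope] at hd3
    have hev := hd3.eventually (eventually_gt_nhds (show γ/2 < γ by linarith))
    rw [eventually_nhdsWithin_iff, Metric.eventually_nhds_iff] at hev
    obtain ⟨δ₁, hδ₁pos, hball⟩ := hev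
    refine ⟨δ₁, hδ₁pos, fun x hx h1 h2 => ?_⟩
    have hdist : dist x (-L) < δ₁ := by
      rw [Real.dist_eq, abs_of_pos (by linarith : (0:ℝ) < x - -L)]
      linarith
    have hmem : x ∈ s \ {-L} := ⟨hx, by simpa using h1.ne'⟩
    have hsl := hball hdist hmem
    rw [slope_def_field, hΘ''L1, sub_zero] at hsl
    have hpos' : (0:ℝ) < x - -L := by linarith
    have := (lt_div_iff₀ hpos').mp hsl
    nlinarith [this]
  obtain ⟨δ₂, hδ₂pos, hs2⟩ : ∃ δ₂ > 0, ∀ x ∈ s, x < L → L - δ₂ < x →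
      γ / 2 * (L - x) ≤ f x := by
    have heq2 : ∀ y ∈ s, iteratedDerivWithin 2 Θ s y = f y := by
      intro y hy
      have e1 : Set.EqOn (iteratedDerivWithin 1 Θ s) (deriv Θ) s := by
        intro z hz
        rw [iteratedDerivWithin_one]
        exact (hdΘ z).derivWithin (hus z hz)
      have e2 : iteratedDerivWithin 2 Θ s y
          = derivWithin (iteratedDerivWithin 1 Θ s) s y :=
        congrFun iteratedDerivWithin_succ y
      rw [e2, derivWithin_congr e1 (e1 hy)]
      exact (hdΘ' y).derivWithin (hus y hy)
    have hdiff2 : DifferentiableWithinAt ℝ (iteratedDerivWithin 2 Θ s) s L :=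
      (hC3.differentiableOn_iteratedDerivWithin (by norm_num) hus) _ hmemR
    have e3 : derivWithin (iteratedDerivWithin 2 Θ s) s L = -γ := by
      rw [← iteratedDerivWithin_succ]
      exact h3L2
    have hd3 : HasDerivWithinAt f (-γ) s L :=
      (e3 ▸ hdiff2.hasDerivWithinAt).congr
        (fun y hy => (heq2 y hy).symm) ((heq2 _ hmemR).symm)
    rw [hasDerivWithinAt_iff_tendsto_slope] at hd3
    have hev := hd3.eventually (eventually_lt_nhds (show -γ < -γ/2 by linarith))
    rw [eventually_nhdsWithin_iff, Metric.eventually_nhds_iff] at hev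
    obtain ⟨δ₂, hδ₂pos, hball⟩ := hev
    refine ⟨δ₂, hδ₂pos, fun x hx h1 h2 => ?_⟩
    have hdist : dist x L < δ₂ := by
      rw [Real.dist_eq, abs_of_neg (by linarith : x - L < (0:ℝ))]
      linarith
    have hmem : x ∈ s \ {L} := ⟨hx, by simpa using h1.ne⟩
    have hsl := hball hdist hmem
    rw [slope_def_field, hΘ''L2, sub_zero] at hsl
    have hneg' : x - L < (0:ℝ) := by linarith
    have := (div_lt_iff_of_neg hneg').mp hsl
    nlinarith [this]
  -- choose δ
  set δ := min (min (δ₁/2) (δ₂/2)) (min L ((γ / (16 * lam * M ^ 2)) ^ 2)) with hδdef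
  have hδpos : 0 < δ := by
    exact lt_min (lt_min (half_pos hδ₁pos) (half_pos hδ₂pos)) (lt_min hL (by positivity))
  have hδL : δ ≤ L := le_trans (min_le_right _ _) (min_le_left _ _)
  have hδ1 : δ < δ₁ := lt_of_le_of_lt ((min_le_left _ _).trans (min_le_left _ _)) (by linarith)
  have hδ2 : δ < δ₂ := lt_of_le_of_lt ((min_le_left _ _).trans (min_le_right _ _)) (by linarith)
  have hδγ : δ ≤ (γ / (16 * lam * M ^ 2)) ^ 2 := (min_le_right _ _).trans (min_le_right _ _)
  -- boundary estimate, uniform in K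
  have hbdy : ∀ x, -L < x → x < L → (x ≤ -L + δ ∨ L - δ ≤ x) →
      0 ≤ f x + 2 * lam * (Θ x * Real.log (Θ x)) := by
    intro x hx1 hx2 hx3
    have hxIcc : x ∈ s := ⟨hx1.le, hx2.le⟩
    have hΘpos : 0 < Θ x := hpos x ⟨hx1, hx2⟩
    rcases hx3 with h | h
    · have ht : 0 < x + L := by linarith
      have hfl : γ / 2 * (x + L) ≤ f x := hs1 x hxIcc hx1 (by linarith)
      have hsb := strip_bound hlam hγ hM1 ht hΘpos (hquadL x hxIcc)
        (by linarith : x + L ≤ (γ / (16 * lam * M ^ 2)) ^ 2)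
      linarith only [hsb, hfl]
    · have ht : 0 < L - x := by linarith
      have hfl : γ / 2 * (L - x) ≤ f x := hs2 x hxIcc hx2 (by linarith)
      have hsb := strip_bound hlam hγ hM1 ht hΘpos (hquadR x hxIcc)
        (by linarith : L - x ≤ (γ / (16 * lam * M ^ 2)) ^ 2)
      linarith only [hsb, hfl]
  -- minimum of Θ on the middle compact set
  obtain ⟨x₀, hx₀mem, hx₀min⟩ : ∃ x₀ ∈ Set.Icc (-L+δ) (L-δ),
      ∀ y ∈ Set.Icc (-L+δ) (L-δ), Θ x₀ ≤ Θ y := by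
    obtain ⟨x₀, hmem, hmin⟩ := isCompact_Icc.exists_isMinOn
      ⟨-L+δ, Set.left_mem_Icc.2 (show -L+δ ≤ L-δ by linarith)⟩ hC2.continuous.continuousOn
    exact ⟨x₀, hmem, fun y hy => hmin hy⟩
  set θs := Θ x₀ with hθsdef
  have hθspos : 0 < θs :=
    hpos x₀ ⟨by linarith [hx₀mem.1], by linarith [hx₀mem.2]⟩
  -- choice of K₀
  refine ⟨max 2 (Real.exp ((M + 2 * lam * |Real.log θs|) / (2 * lam * θs))),
    lt_of_lt_of_le one_lt_two (le_max_left _ _), ?_⟩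
  intro K hK x
  have hK2 : (2:ℝ) ≤ K := le_trans (le_max_left _ _) hK
  have hKpos : (0:ℝ) < K := by linarith
  have hlogK : 0 ≤ Real.log K := Real.log_nonneg (by linarith)
  by_cases hx : x ∈ Set.Ioo (-L) L
  · have hΘpos : 0 < Θ x := hpos x hx
    have hsplit : Real.log (K * Θ x) = Real.log K + Real.log (Θ x) :=
      Real.log_mul hKpos.ne' hΘpos.ne'
    have hexpand : K * f x + 2 * lam * (K * Θ x) * (Real.log K + Real.log (Θ x))
        = K * (f x + 2 * lam * (Θ x * Real.log (Θ x)) + 2 * lam * Θ x * Real.log K) := by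
      ring
    rw [hsplit, hexpand]
    refine mul_nonneg hKpos.le ?_
    by_cases hmid : x ≤ -L + δ ∨ L - δ ≤ x
    · have hb := hbdy x hx.1 hx.2 hmid
      have h2 : 0 ≤ 2 * lam * Θ x * Real.log K := by positivity
      linarith
    · push_neg at hmid
      have hxmid : x ∈ Set.Icc (-L+δ) (L-δ) := ⟨hmid.1.le, hmid.2.le⟩
      have hθle : θs ≤ Θ x := hx₀min x hxmid
      have hfx : -M ≤ f x := by
        have := hMb x ⟨hx.1.le, hx.2.le⟩
        have := abs_le.mp this
        linarith [this.1]
      have hΘlog : -|Real.log θs| ≤ Θ x * Real.log (Θ x) := by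
        by_cases h1 : 1 ≤ Θ x
        · have h0 : 0 ≤ Real.log (Θ x) := Real.log_nonneg h1
          have := mul_nonneg hΘpos.le h0
          linarith only [this, abs_nonneg (Real.log θs)]
        · push_neg at h1
          have hlogneg : Real.log (Θ x) ≤ 0 := Real.log_nonpos hΘpos.le h1.le
          have h2 : Real.log θs ≤ Real.log (Θ x) := Real.log_le_log hθspos hθle
          have hkey : 0 ≤ (1 - Θ x) * (-Real.log (Θ x)) :=
            mul_nonneg (by linarith only [h1]) (by linarith only [hlogneg])
          have hkey2 : (1 - Θ x) * (-Real.log (Θ x))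
              = Θ x * Real.log (Θ x) - Real.log (Θ x) := by ring
          linarith only [hkey, hkey2, h2, neg_abs_le (Real.log θs)]
      have hQ : (M + 2 * lam * |Real.log θs|) / (2 * lam * θs) ≤ Real.log K := by
        rw [Real.le_log_iff_exp_le hKpos]
        exact le_trans (le_max_right _ _) hK
      have h1 : 2 * lam * θs * ((M + 2 * lam * |Real.log θs|) / (2 * lam * θs))
          ≤ 2 * lam * θs * Real.log K := by
        exact mul_le_mul_of_nonneg_left hQ (by positivity)
      have h2 : 2 * lam * θs * ((M + 2 * lam * |Real.log θs|) / (2 * lam * θs))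
          = M + 2 * lam * |Real.log θs| := by
        field_simp
      have h3 : 2 * lam * θs * Real.log K ≤ 2 * lam * Θ x * Real.log K := by
        have := mul_le_mul_of_nonneg_right
          (mul_le_mul_of_nonneg_left hθle (by positivity : (0:ℝ) ≤ 2 * lam)) hlogK
        linarith
      have h4 : 2 * lam * (-|Real.log θs|) ≤ 2 * lam * (Θ x * Real.log (Θ x)) :=
        mul_le_mul_of_nonneg_left hΘlog (by positivity)
      linarith
  · -- outside the open interval: Θ x = 0 and f x = 0
    have hΘ0 : Θ x = 0 := by
      by_cases hx2 : x ∈ s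
      · rcases eq_or_lt_of_le hx2.1 with h | h
        · rw [← h, hΘL1]
        · rcases eq_or_lt_of_le hx2.2 with h' | h'
          · rw [h', hΘL2]
          · exact absurd ⟨h, h'⟩ hx
      · exact hsupp x hx2
    have hf0 : f x = 0 := by
      by_cases hx2 : x ∈ s
      · rcases eq_or_lt_of_le hx2.1 with h | h
        · rw [← h]; exact hΘ''L1
        · rcases eq_or_lt_of_le hx2.2 with h' | h'
          · rw [h']; exact hΘ''L2
          · exact absurd ⟨h, h'⟩ hx
      · exact hfout x hx2
    simp [hΘ0, hf0]
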